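/- Let γ ∈ (-2, 2), β := 2/(2-γ), s := βγ. If u : Ω → (0,∞) is a C² function on an open set Ω ⊂ ℝ^d satisfying Δu = (γ/2) u^{γ-1} in Ω, then w := β u^{1/β} is a positive C² function on Ω satisfying Δw = (s/2)(1 - |∇w|²)/w in Ω. -/

import Mathlib

open Real Filter Topology RealInnerProductSpace

lemma one_dim (f : ℝ → ℝ) (α β : ℝ) (hβα : β * α = 1)
    (hf : ∀ᶠ t in 𝓝 (0:ℝ), ContDiffAt ℝ 2 f t) (hpos : ∀ᶠ t in 𝓝 (0:ℝ), 0 < f t) :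
    deriv (fun t => β * f t ^ α) 0 = f 0 ^ (α - 1) * deriv f 0 ∧
    deriv (deriv (fun t => β * f t ^ α)) 0 =
      (α - 1) * f 0 ^ (α - 2) * (deriv f 0) ^ 2 + f 0 ^ (α - 1) * deriv (deriv f) 0 := by
  have key : ∀ t : ℝ, ContDiffAt ℝ 2 f t → 0 < f t →
      HasDerivAt (fun t => β * f t ^ α) (f t ^ (α - 1) * deriv f t) t := by
    intro t ht hpt
    have hd : HasDerivAt f (deriv f t) t := (ht.differentiableAt two_ne_zero).hasDerivAt
    have h := (hd.rpow_const (p := α) (Or.inl hpt.ne')).const_mul β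
    have he : β * (deriv f t * α * f t ^ (α - 1)) = f t ^ (α - 1) * deriv f t := by
      have : β * (deriv f t * α * f t ^ (α - 1))
          = (β * α) * (f t ^ (α - 1) * deriv f t) := by ring
      rw [this, hβα, one_mul]
    rwa [he] at h
  have h0 : ContDiffAt ℝ 2 f 0 := hf.self_of_nhds
  have hp0 : 0 < f 0 := hpos.self_of_nhds
  refine ⟨(key 0 h0 hp0).deriv, ?_⟩
  have hEq : deriv (fun t => β * f t ^ α) =ᶠ[𝓝 (0:ℝ)] fun t => f t ^ (α - 1) * deriv f t :=
    (hf.and hpos).mono fun t ⟨ht, hpt⟩ => (key t ht hpt).deriv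
  rw [hEq.deriv_eq]
  have hd : HasDerivAt f (deriv f 0) 0 := (h0.differentiableAt two_ne_zero).hasDerivAt
  have h1 : HasDerivAt (fun t => f t ^ (α - 1)) (deriv f 0 * (α - 1) * f 0 ^ (α - 1 - 1)) 0 :=
    hd.rpow_const (Or.inl hp0.ne')
  have hderiv_eq : deriv f = fun t => fderiv ℝ f t 1 := by funext t; rfl
  have hdd : DifferentiableAt ℝ (deriv f) 0 := by
    rw [hderiv_eq]
    have : ContDiffAt ℝ 1 (fderiv ℝ f) 0 := h0.fderiv_right (by norm_num)
    exact (this.differentiableAt one_ne_zero).clm_apply (differentiableAt_const _)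
  have h3 : HasDerivAt (fun t => f t ^ (α - 1) * deriv f t) _ 0 := h1.mul hdd.hasDerivAt
  rw [h3.deriv]
  have : α - 1 - 1 = α - 2 := by ring
  rw [this]; ring

lemma norm_grad_sq (d : ℕ) (w : EuclideanSpace ℝ (Fin d) → ℝ) (x : EuclideanSpace ℝ (Fin d)) :
    ‖gradient w x‖ ^ 2 = ∑ i : Fin d, (fderiv ℝ w x (EuclideanSpace.single i 1)) ^ 2 := by
  have hy : ∀ y : EuclideanSpace ℝ (Fin d), ⟪gradient w x, y⟫ = fderiv ℝ w x y := fun y => by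
    rw [gradient, InnerProductSpace.toDual_symm_apply]
  have h1 : ∀ i, gradient w x i = fderiv ℝ w x (EuclideanSpace.single i 1) := by
    intro i
    rw [← hy]
    have := EuclideanSpace.inner_single_right (𝕜 := ℝ) i 1 (gradient w x)
    simpa using this.symm
  rw [← real_inner_self_eq_norm_sq, PiLp.inner_apply]
  simp only [RCLike.inner_apply, conj_trivial]
  exact Finset.sum_congr rfl fun i _ => by rw [h1 i]; ring

/-- The Laplacian of `u` at `x`, defined as the sum of the second derivatives
of `u` along the coordinate directions. -/
noncomputable def lap (d : ℕ) (u : EuclideanSpace ℝ (Fin d) → ℝ)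
    (x : EuclideanSpace ℝ (Fin d)) : ℝ :=
  ∑ i : Fin d, deriv (deriv (fun t : ℝ => u (x + t • EuclideanSpace.single i 1))) 0

theorem stmt_2 (d : ℕ) (γ β s : ℝ) (hγ₁ : -2 < γ) (hγ₂ : γ < 2)
    (hβ : β = 2 / (2 - γ)) (hs : s = β * γ)
    (Ω : Set (EuclideanSpace ℝ (Fin d))) (hΩ : IsOpen Ω)
    (u : EuclideanSpace ℝ (Fin d) → ℝ) (hupos : ∀ x ∈ Ω, 0 < u x)
    (hureg : ContDiffOn ℝ 2 u Ω)
    (hpde : ∀ x ∈ Ω, lap d u x = (γ / 2) * (u x) ^ (γ - 1))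
    (w : EuclideanSpace ℝ (Fin d) → ℝ) (hw : ∀ x, w x = β * (u x) ^ (1 / β)) :
    (∀ x ∈ Ω, 0 < w x) ∧ ContDiffOn ℝ 2 w Ω ∧
      ∀ x ∈ Ω, lap d w x = (s / 2) * (1 - ‖gradient w x‖ ^ 2) / (w x) := by
  have hwfun : w = fun x => β * (u x) ^ (1 / β) := funext hw
  subst hwfun
  have h2γ : 0 < 2 - γ := by linarith
  have hβpos : 0 < β := by rw [hβ]; positivity
  set α : ℝ := 1 / β with hα
  have hβα : β * α = 1 := by
    rw [hα]; field_simp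
  have hαval : α = (2 - γ) / 2 := by
    rw [hα, hβ]; field_simp
  -- positivity
  have hwpos : ∀ x ∈ Ω, 0 < β * (u x) ^ (1 / β) := fun x hx =>
    mul_pos hβpos (rpow_pos_of_pos (hupos x hx) _)
  refine ⟨hwpos, ?_, ?_⟩
  · exact contDiffOn_const.mul
      (hureg.rpow_const_of_ne fun x hx => (hupos x hx).ne')
  -- the PDE
  intro x hx
  set v : Fin d → EuclideanSpace ℝ (Fin d) := fun i => EuclideanSpace.single i 1 with hv
  set f : Fin d → ℝ → ℝ := fun i t => u (x + t • v i) with hf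
  have hx0 : ∀ i, x + (0:ℝ) • v i = x := by intro i; simp
  have hline : ∀ i, ContDiff ℝ ⊤ (fun t : ℝ => x + t • v i) := fun i =>
    contDiff_const.add (contDiff_id.smul contDiff_const)
  have hmemnhds : ∀ i, ∀ᶠ t in 𝓝 (0:ℝ), x + t • v i ∈ Ω := by
    intro i
    have hc : Continuous (fun t : ℝ => x + t • v i) := (hline i).continuous
    have : (fun t : ℝ => x + t • v i) ⁻¹' Ω ∈ 𝓝 (0:ℝ) := by
      apply (hΩ.preimage hc).mem_nhds
      simp only [Set.mem_preimage, hx0 i]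
      exact hx
    exact this
  have hfC : ∀ i, ∀ᶠ t in 𝓝 (0:ℝ), ContDiffAt ℝ 2 (f i) t := by
    intro i
    filter_upwards [hmemnhds i] with t ht
    exact (hureg.contDiffAt (hΩ.mem_nhds ht)).comp t ((hline i).contDiffAt.of_le le_top)
  have hfpos : ∀ i, ∀ᶠ t in 𝓝 (0:ℝ), 0 < f i t := by
    intro i
    filter_upwards [hmemnhds i] with t ht
    exact hupos _ ht
  -- one-dimensional computations
  have hone := fun i => one_dim (f i) α β hβα (hfC i) (hfpos i)
  have hf0 : ∀ i, f i 0 = u x := by intro i; simp only [hf, zero_smul, add_zero]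
  -- relation between the deriv of w along lines and fderiv of w
  have hwdiff : DifferentiableAt ℝ (fun y => β * (u y) ^ α) x := by
    have hC : ContDiffAt ℝ 2 (fun y => β * (u y) ^ α) x :=
      (contDiffAt_const.mul
        ((hureg.contDiffAt (hΩ.mem_nhds hx)).rpow_const_of_ne (hupos x hx).ne'))
    exact hC.differentiableAt two_ne_zero
  have hlinederiv : ∀ i, HasDerivAt (fun t : ℝ => x + t • v i) (v i) 0 := by
    intro i
    simpa using ((hasDerivAt_id (0:ℝ)).smul_const (v i)).const_add x
  have hfderivw : ∀ i, fderiv ℝ (fun y => β * (u y) ^ α) x (v i)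
      = deriv (fun t : ℝ => β * (u (x + t • v i)) ^ α) 0 := by
    intro i
    have hl : HasFDerivAt (fun y => β * (u y) ^ α)
        (fderiv ℝ (fun y => β * (u y) ^ α) x) (x + (0:ℝ) • v i) := by
      rw [hx0 i]; exact hwdiff.hasFDerivAt
    have h := hl.comp_hasDerivAt 0 (hlinederiv i)
    have h2 : HasDerivAt (fun t : ℝ => β * (u (x + t • v i)) ^ α)
        (fderiv ℝ (fun y => β * (u y) ^ α) x (v i)) 0 := h
    exact h2.deriv.symm
  -- gradient norm
  have hgrad : ‖gradient (fun y => β * (u y) ^ α) x‖ ^ 2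
      = ∑ i : Fin d, ((u x) ^ (α - 1) * deriv (f i) 0) ^ 2 := by
    rw [norm_grad_sq]
    refine Finset.sum_congr rfl fun i _ => ?_
    rw [show (EuclideanSpace.single i (1:ℝ)) = v i from rfl, hfderivw i]
    have h1 := (hone i).1
    rw [hf0 i] at h1
    exact congrArg (· ^ 2) h1
  -- Laplacian computation
  have hlapw : lap d (fun y => β * (u y) ^ α) x
      = (α - 1) * (u x) ^ (α - 2) * (∑ i : Fin d, (deriv (f i) 0) ^ 2)
        + (u x) ^ (α - 1) * lap d u x := by
    rw [lap, lap, Finset.mul_sum, Finset.mul_sum, ← Finset.sum_add_distrib]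
    refine Finset.sum_congr rfl fun i _ => ?_
    have h2 := (hone i).2
    rw [hf0 i] at h2
    exact h2.trans (by ring)
  rw [hlapw, hgrad, hpde x hx]
  -- final algebra with rpow identities
  have hUpos : 0 < u x := hupos x hx
  set U := u x with hU
  set P := ∑ i : Fin d, (deriv (f i) 0) ^ 2 with hP
  have hsum : ∑ i : Fin d, (U ^ (α - 1) * deriv (f i) 0) ^ 2 = (U ^ (α - 1)) ^ 2 * P := by
    rw [hP, Finset.mul_sum]
    exact Finset.sum_congr rfl fun i _ => by ring
  rw [hsum]
  have e1 : U ^ (α - 1) * ((γ / 2) * U ^ (γ - 1)) = (γ / 2) * U ^ (-α) := by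
    rw [mul_comm (U ^ (α - 1)), mul_assoc, ← Real.rpow_add hUpos]
    congr 2
    rw [hαval]; ring
  have e2 : (U ^ (α - 1)) ^ 2 = U ^ α * U ^ (α - 2) := by
    rw [sq, ← Real.rpow_add hUpos, ← Real.rpow_add hUpos]
    congr 1; ring
  have e3 : U ^ (-α) * U ^ α = 1 := by
    rw [← Real.rpow_add hUpos]; simp
  have hUα : (0:ℝ) < U ^ α := rpow_pos_of_pos hUpos _
  rw [e1, e2, hs]
  show (α - 1) * U ^ (α - 2) * P + γ / 2 * U ^ (-α)
      = β * γ / 2 * (1 - U ^ α * U ^ (α - 2) * P) / (β * U ^ α)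
  rw [eq_div_iff (mul_pos hβpos hUα).ne']
  have hα1 : α - 1 = -(γ/2) := by rw [hαval]; ring
  have expand : ((α - 1) * U ^ (α - 2) * P + γ / 2 * U ^ (-α)) * (β * U ^ α)
      = (α - 1) * β * (U ^ α * U ^ (α - 2)) * P + γ / 2 * β * (U ^ (-α) * U ^ α) := by ring
  rw [expand, e3, hα1]
  ring
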